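/- Let x be a circular string of length G over {A,C,G,T} with f_A occurrences of the letter A, and let y be obtained from x by the random substitution process with rate p, with f'_A occurrences of A in y. Suppose G ≠ 4·f_A and let p̂ = 3·(f'_A − f_A)/(G − 4·f_A). Then for every ε > 0 and p > 0, Pr(|p̂ − p| ≥ ε·p) ≤ 2·exp(−(32/9)·G·|f_A/G − 1/4|²·p²·ε²). -/

import Mathlib

open MeasureTheory

noncomputable section

/-- Substitution kernel weight: probability that letter `a` becomes letter `b`
under the rate-`q` substitution process. -/
def substW (q : ℝ) (a b : Fin 4) : ℝ := if b = a then 1 - q else q / 3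

/-- The discrete measure on a finite type with weight function `w`. -/
def discMeasure {α : Type*} [Fintype α] [MeasurableSpace α] (w : α → ℝ) : Measure α :=
  ∑ a : α, ENNReal.ofReal (w a) • Measure.dirac a

/-- Weight of outcome `y` for the rate-`p` substitution process applied to `x`. -/
def mutateW {G : ℕ} (p : ℝ) (x y : Fin G → Fin 4) : ℝ := ∏ i, substW p (x i) (y i)

/-- Distribution of the string obtained from `x` by the random substitution
process with rate `p`: i.i.d. substitutions at every position. -/
def mutate {G : ℕ} (p : ℝ) (x : Fin G → Fin 4) : Measure (Fin G → Fin 4) :=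
  discMeasure (mutateW p x)

/-- Number of occurrences of the letter `a` in the string `z`. -/
def countLetter {G : ℕ} (z : Fin G → Fin 4) (a : Fin 4) : ℕ :=
  (Finset.univ.filter fun i => z i = a).card

open scoped Classical

lemma bern_pos {q : ℝ} (h0 : 0 ≤ q) (h1 : q ≤ 1) (s : ℝ) :
    0 < 1 - q + q * Real.exp s := by
  rcases lt_or_eq_of_le h1 with h | h
  · nlinarith [Real.exp_pos s, mul_nonneg h0 (Real.exp_pos s).le]
  · subst h; simpa using Real.exp_pos s

/-- Hoeffding's lemma for a Bernoulli variable. -/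
lemma bern_mgf {q : ℝ} (h0 : 0 ≤ q) (h1 : q ≤ 1) (t : ℝ) :
    1 - q + q * Real.exp t ≤ Real.exp (q * t + t ^ 2 / 8) := by
  set D : ℝ → ℝ := fun s => 1 - q + q * Real.exp s with hDdef
  have hDpos : ∀ s, 0 < D s := fun s => bern_pos h0 h1 s
  set h : ℝ → ℝ := fun s => q * s + s ^ 2 / 8 - Real.log (D s) with hhdef
  set h' : ℝ → ℝ := fun s => q + s / 4 - q * Real.exp s / D s with hh'def
  have hD : ∀ s, HasDerivAt D (q * Real.exp s) s := by
    intro s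
    exact ((Real.hasDerivAt_exp s).const_mul q).const_add (1 - q)
  have hh : ∀ s, HasDerivAt h (h' s) s := by
    intro s
    have h1' : HasDerivAt (fun s : ℝ => q * s + s ^ 2 / 8) (q + 2 * s / 8) s := by
      have := ((hasDerivAt_pow 2 s).div_const 8).const_add 0
      have h2 : HasDerivAt (fun s : ℝ => q * s) q s := by
        simpa using (hasDerivAt_id s).const_mul q
      exact (h2.add ((hasDerivAt_pow 2 s).div_const 8)).congr_deriv (by norm_num)
    have h3 : HasDerivAt (fun s => Real.log (D s)) (q * Real.exp s / D s) s :=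
      (hD s).log (hDpos s).ne'
    have := h1'.sub h3
    exact this.congr_deriv (by simp only [hh'def]; ring)
  have hh' : ∀ s, HasDerivAt h'
      (1/4 - (q * Real.exp s * D s - q * Real.exp s * (q * Real.exp s)) / (D s)^2) s := by
    intro s
    have h4 : HasDerivAt (fun s : ℝ => q + s / 4) (1/4) s := by
      simpa using ((hasDerivAt_id s).div_const 4).const_add q
    have h5 : HasDerivAt (fun s => q * Real.exp s / D s)
        ((q * Real.exp s * D s - q * Real.exp s * (q * Real.exp s)) / (D s)^2) s :=
      ((Real.hasDerivAt_exp s).const_mul q).div (hD s) (hDpos s).ne'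
    exact h4.sub h5
  have hh'nonneg : ∀ s, 0 ≤ 1/4 - (q * Real.exp s * D s - q * Real.exp s * (q * Real.exp s)) / (D s)^2 := by
    intro s
    have hD2 : (0:ℝ) < (D s)^2 := pow_pos (hDpos s) 2
    rw [sub_nonneg, div_le_iff₀ hD2]
    have key : ∀ u d : ℝ, u * d - u * u ≤ 1/4 * d^2 := by
      intro u d; nlinarith [sq_nonneg (2*u - d)]
    exact key _ _
  have hmono' : Monotone h' := monotone_of_hasDerivAt_nonneg hh' (fun s => hh'nonneg s)
  have h'0 : h' 0 = 0 := by
    simp [hh'def, hDdef]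
  have h0v : h 0 = 0 := by
    have : D 0 = 1 := by simp [hDdef]
    simp [hhdef, this]
  have key : ∀ s, 0 ≤ h s := by
    intro s
    rcases le_total 0 s with hs | hs
    · have hmono : MonotoneOn h (Set.Ici 0) := by
        apply monotoneOn_of_hasDerivWithinAt_nonneg (convex_Ici 0)
          (fun x _ => (hh x).continuousAt.continuousWithinAt)
          (fun x _ => (hh x).hasDerivWithinAt)
        intro x hx
        rw [interior_Ici] at hx
        have : h' 0 ≤ h' x := hmono' (le_of_lt hx)
        linarith [h'0 ▸ this]
      have := hmono Set.self_mem_Ici hs hs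
      linarith [h0v ▸ this]
    · have hanti : AntitoneOn h (Set.Iic 0) := by
        apply antitoneOn_of_hasDerivWithinAt_nonpos (convex_Iic 0)
          (fun x _ => (hh x).continuousAt.continuousWithinAt)
          (fun x _ => (hh x).hasDerivWithinAt)
        intro x hx
        rw [interior_Iic] at hx
        have : h' x ≤ h' 0 := hmono' (le_of_lt hx)
        linarith [h'0 ▸ this]
      have := hanti hs Set.self_mem_Iic hs
      linarith [h0v ▸ this]
  have hk := key t
  have hlog : Real.log (D t) ≤ q * t + t ^ 2 / 8 := by
    simp only [hhdef] at hk; linarith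
  calc D t = Real.exp (Real.log (D t)) := (Real.exp_log (hDpos t)).symm
    _ ≤ Real.exp (q * t + t ^ 2 / 8) := Real.exp_le_exp.mpr hlog

def chiA (b : Fin 4) : ℝ := if b = 0 then 1 else 0

lemma substW_nonneg {p : ℝ} (hp0 : 0 ≤ p) (hp1 : p ≤ 1) (a b : Fin 4) :
    0 ≤ substW p a b := by
  unfold substW; split <;> linarith

lemma substW_le_one {p : ℝ} (hp0 : 0 ≤ p) (hp1 : p ≤ 1) (a b : Fin 4) :
    substW p a b ≤ 1 := by
  unfold substW; split <;> linarith

lemma mutateW_nonneg {G : ℕ} {p : ℝ} (hp0 : 0 ≤ p) (hp1 : p ≤ 1)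
    (x y : Fin G → Fin 4) : 0 ≤ mutateW p x y :=
  Finset.prod_nonneg fun i _ => substW_nonneg hp0 hp1 _ _

lemma countLetter_eq_sum {G : ℕ} (y : Fin G → Fin 4) :
    (countLetter y 0 : ℝ) = ∑ i, chiA (y i) := by
  unfold countLetter chiA
  rw [Finset.card_filter]
  push_cast
  exact Finset.sum_congr rfl fun i _ => by split <;> simp

lemma per_letter (p c : ℝ) (a : Fin 4) :
    ∑ b, substW p a b * Real.exp (c * chiA b)
      = 1 - substW p a 0 + substW p a 0 * Real.exp c := by
  fin_cases a <;>
    simp [substW, chiA, Fin.sum_univ_four, Real.exp_zero] <;> ring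

lemma mgf_eq {G : ℕ} (p : ℝ) (x : Fin G → Fin 4) (c : ℝ) :
    ∑ y : Fin G → Fin 4, mutateW p x y * Real.exp (c * ∑ i, chiA (y i))
      = ∏ i, (1 - substW p (x i) 0 + substW p (x i) 0 * Real.exp c) := by
  have step : ∀ y : Fin G → Fin 4,
      mutateW p x y * Real.exp (c * ∑ i, chiA (y i))
        = ∏ i, (substW p (x i) (y i) * Real.exp (c * chiA (y i))) := by
    intro y
    rw [Finset.mul_sum, Real.exp_sum, mutateW, ← Finset.prod_mul_distrib]
  rw [Finset.sum_congr rfl fun y _ => step y]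
  rw [show (Finset.univ : Finset (Fin G → Fin 4))
      = Fintype.piFinset (fun _ => Finset.univ) from (Fintype.piFinset_univ).symm]
  exact (Finset.sum_prod_piFinset Finset.univ
      (fun i k => substW p (x i) k * Real.exp (c * chiA k))).trans
    (Finset.prod_congr rfl fun i _ => per_letter p c (x i))

lemma sum_q {G : ℕ} (p : ℝ) (x : Fin G → Fin 4) :
    ∑ i, substW p (x i) 0
      = (countLetter x 0 : ℝ) + p * ((G : ℝ) - 4 * (countLetter x 0 : ℝ)) / 3 := by
  have hterm : ∀ i, substW p (x i) 0
      = p / 3 + (if x i = 0 then 1 - p - p / 3 else 0) := by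
    intro i
    by_cases h : x i = 0 <;> simp [substW, h, eq_comm] <;> ring
  rw [Finset.sum_congr rfl fun i _ => hterm i, Finset.sum_add_distrib,
    Finset.sum_const, ← Finset.sum_filter, Finset.sum_const]
  unfold countLetter
  simp only [Finset.card_univ, Fintype.card_fin, nsmul_eq_mul]
  push_cast
  ring

lemma discMeasure_apply {α : Type*} [Fintype α] [MeasurableSpace α]
    [MeasurableSingletonClass α] (w : α → ℝ) (hw : ∀ a, 0 ≤ w a) (S : Set α) :
    discMeasure w S = ENNReal.ofReal (∑ a ∈ Finset.univ.filter (· ∈ S), w a) := by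
  classical
  have hS : MeasurableSet S := (Set.to_countable S).measurableSet
  rw [discMeasure, Measure.finset_sum_apply]
  simp_rw [Measure.smul_apply, Measure.dirac_apply' _ hS, smul_eq_mul,
    Set.indicator_apply, Pi.one_apply, mul_ite, mul_one, mul_zero]
  rw [← Finset.sum_filter, ← ENNReal.ofReal_sum_of_nonneg (fun a _ => hw a)]

lemma tail_bound {G : ℕ} (x : Fin G → Fin 4) {p : ℝ} (hp0 : 0 < p) (hp1 : p ≤ 1)
    (hG : 0 < G) (σ : ℝ) (hσ : σ = 1 ∨ σ = -1) {a : ℝ} (ha : 0 ≤ a) :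
    ∑ y ∈ Finset.univ.filter (fun y : Fin G → Fin 4 =>
        a ≤ σ * ((countLetter y 0 : ℝ) - ∑ i, substW p (x i) 0)), mutateW p x y
      ≤ Real.exp (-2 * a ^ 2 / G) := by
  set μ := ∑ i, substW p (x i) 0 with hμ
  have hG' : (0:ℝ) < G := by exact_mod_cast hG
  set t : ℝ := 4 * a / G with htdef
  have ht : 0 ≤ t := by positivity
  set c := σ * t with hcdef
  have hσ2 : σ * σ = 1 := by rcases hσ with h | h <;> subst h <;> norm_num
  have hwnn := fun y => mutateW_nonneg hp0.le hp1 x y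
  have hqnn := fun i => substW_nonneg hp0.le hp1 (x i) 0
  have hq1 := fun i => substW_le_one hp0.le hp1 (x i) 0
  have step1 : ∀ y ∈ Finset.univ.filter (fun y : Fin G → Fin 4 =>
      a ≤ σ * ((countLetter y 0 : ℝ) - μ)),
      mutateW p x y ≤ Real.exp (-(c * μ) - t * a)
        * (mutateW p x y * Real.exp (c * (countLetter y 0 : ℝ))) := by
    intro y hy
    rw [Finset.mem_filter] at hy
    have harg : 0 ≤ c * ((countLetter y 0 : ℝ) - μ) - t * a := by
      have h2 : t * a ≤ t * (σ * ((countLetter y 0 : ℝ) - μ)) :=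
        mul_le_mul_of_nonneg_left hy.2 ht
      calc (0:ℝ) ≤ t * (σ * ((countLetter y 0 : ℝ) - μ)) - t * a := by linarith
        _ = c * ((countLetter y 0 : ℝ) - μ) - t * a := by rw [hcdef]; ring
    have h1 : (1:ℝ) ≤ Real.exp (c * ((countLetter y 0 : ℝ) - μ) - t * a) :=
      Real.one_le_exp harg
    calc mutateW p x y = mutateW p x y * 1 := (mul_one _).symm
      _ ≤ mutateW p x y * Real.exp (c * ((countLetter y 0 : ℝ) - μ) - t * a) :=
        mul_le_mul_of_nonneg_left h1 (hwnn y)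
      _ = Real.exp (-(c * μ) - t * a)
          * (mutateW p x y * Real.exp (c * (countLetter y 0 : ℝ))) := by
        rw [show c * ((countLetter y 0 : ℝ) - μ) - t * a
          = (-(c * μ) - t * a) + c * (countLetter y 0 : ℝ) by ring, Real.exp_add]
        ring
  calc ∑ y ∈ Finset.univ.filter (fun y : Fin G → Fin 4 =>
        a ≤ σ * ((countLetter y 0 : ℝ) - μ)), mutateW p x y
      ≤ ∑ y ∈ Finset.univ.filter (fun y : Fin G → Fin 4 =>
          a ≤ σ * ((countLetter y 0 : ℝ) - μ)),
          Real.exp (-(c * μ) - t * a)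
            * (mutateW p x y * Real.exp (c * (countLetter y 0 : ℝ))) :=
        Finset.sum_le_sum step1
    _ ≤ ∑ y : Fin G → Fin 4, Real.exp (-(c * μ) - t * a)
          * (mutateW p x y * Real.exp (c * (countLetter y 0 : ℝ))) := by
        apply Finset.sum_le_sum_of_subset_of_nonneg (Finset.filter_subset _ _)
        intro y _ _
        exact mul_nonneg (Real.exp_pos _).le
          (mul_nonneg (hwnn y) (Real.exp_pos _).le)
    _ = Real.exp (-(c * μ) - t * a)
          * ∑ y : Fin G → Fin 4, mutateW p x y * Real.exp (c * (countLetter y 0 : ℝ)) :=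
        (Finset.mul_sum _ _ _).symm
    _ = Real.exp (-(c * μ) - t * a)
          * ∏ i, (1 - substW p (x i) 0 + substW p (x i) 0 * Real.exp c) := by
        rw [show (∑ y : Fin G → Fin 4, mutateW p x y * Real.exp (c * (countLetter y 0 : ℝ)))
          = ∑ y : Fin G → Fin 4, mutateW p x y * Real.exp (c * ∑ i, chiA (y i)) from
            Finset.sum_congr rfl fun y _ => by rw [countLetter_eq_sum], mgf_eq]
    _ ≤ Real.exp (-(c * μ) - t * a)
          * ∏ i, Real.exp (substW p (x i) 0 * c + c ^ 2 / 8) := by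
        apply mul_le_mul_of_nonneg_left _ (Real.exp_pos _).le
        apply Finset.prod_le_prod
        · intro i _; linarith [bern_pos (hqnn i) (hq1 i) c]
        · intro i _; exact bern_mgf (hqnn i) (hq1 i) c
    _ = Real.exp (-(c * μ) - t * a) * Real.exp (μ * c + G * (c ^ 2 / 8)) := by
        rw [← Real.exp_sum]
        congr 1
        rw [Finset.sum_add_distrib, ← Finset.sum_mul, Finset.sum_const,
          Finset.card_univ, Fintype.card_fin, nsmul_eq_mul, hμ]
    _ = Real.exp (-2 * a ^ 2 / G) := by
        rw [← Real.exp_add]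
        congr 1
        have hc2 : c ^ 2 = t ^ 2 := by
          rw [hcdef]; ring_nf; rw [show σ ^ 2 = 1 by nlinarith [hσ2]]; ring
        rw [hc2, htdef]
        field_simp
        ring

/-- Concentration (Hoeffding) bound for the estimator
`p̂ = 3·(f'_A − f_A)/(G − 4·f_A)`:
`Pr(|p̂ − p| ≥ ε·p) ≤ 2·exp(−(32/9)·G·|f_A/G − 1/4|²·p²·ε²)`. -/
theorem estimator_concentration {G : ℕ} (x : Fin G → Fin 4) (p : ℝ) (hp0 : 0 < p)
    (hp1 : p ≤ 1) (ε : ℝ) (hε : 0 < ε)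
    (hG4 : (G : ℝ) ≠ 4 * (countLetter x 0 : ℝ)) :
    mutate p x {y | ε * p ≤
        |3 * ((countLetter y 0 : ℝ) - (countLetter x 0 : ℝ))
          / ((G : ℝ) - 4 * (countLetter x 0 : ℝ)) - p|}
      ≤ ENNReal.ofReal (2 * Real.exp (-(32 / 9) * (G : ℝ)
          * |(countLetter x 0 : ℝ) / (G : ℝ) - 1 / 4| ^ 2 * p ^ 2 * ε ^ 2)) := by

  have hfle : countLetter x 0 ≤ G := by
    have := Finset.card_filter_le (Finset.univ : Finset (Fin G)) (fun i => x i = 0)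
    simpa [countLetter] using this
  have hGpos : 0 < G := by
    rcases Nat.eq_zero_or_pos G with h | h
    · exfalso; subst h
      have h0 : countLetter x 0 = 0 := Nat.le_zero.mp hfle
      simp [h0] at hG4
    · exact h
  have hG' : (0:ℝ) < G := by exact_mod_cast hGpos
  set f : ℝ := (countLetter x 0 : ℝ) with hfdef
  set d : ℝ := (G:ℝ) - 4 * f with hddef
  have hd : d ≠ 0 := sub_ne_zero.mpr hG4
  have hdabs : 0 < |d| := abs_pos.mpr hd
  set μ : ℝ := ∑ i, substW p (x i) 0 with hμdef
  have hμ : μ = f + p * d / 3 := sum_q p x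
  set a : ℝ := ε * p * |d| / 3 with hadef
  have ha : 0 < a := by
    rw [hadef]; positivity
  set E : Set (Fin G → Fin 4) :=
    {y | ε * p ≤ |3 * ((countLetter y 0 : ℝ) - f) / d - p|} with hEdef
  have hmem : ∀ y : Fin G → Fin 4, y ∈ E →
      a ≤ 1 * ((countLetter y 0 : ℝ) - μ) ∨ a ≤ -1 * ((countLetter y 0 : ℝ) - μ) := by
    intro y hy
    set S : ℝ := (countLetter y 0 : ℝ) with hSdef
    have hy' : ε * p ≤ |3 * (S - f) / d - p| := hy
    have hkey : 3 * (S - f) / d - p = 3 * (S - μ) / d := by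
      rw [hμ]; field_simp; ring
    rw [hkey] at hy'
    have habs : |3 * (S - μ) / d| = 3 * |S - μ| / |d| := by
      rw [abs_div, abs_mul]
      norm_num
    rw [habs] at hy'
    have h4 : ε * p * |d| ≤ 3 * |S - μ| := by
      calc ε * p * |d| ≤ (3 * |S - μ| / |d|) * |d| :=
            mul_le_mul_of_nonneg_right hy' hdabs.le
        _ = 3 * |S - μ| := by field_simp
    have h2 : a ≤ |S - μ| := by rw [hadef]; linarith
    rcases le_abs.mp h2 with h | h
    · left; linarith
    · right; linarith
  rw [mutate, discMeasure_apply (mutateW p x) (mutateW_nonneg hp0.le hp1 x) E]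
  have h1 := tail_bound x hp0 hp1 hGpos 1 (Or.inl rfl) ha.le
  have h2 := tail_bound x hp0 hp1 hGpos (-1) (Or.inr rfl) ha.le
  set F1 := Finset.univ.filter (fun y : Fin G → Fin 4 =>
    a ≤ 1 * ((countLetter y 0 : ℝ) - μ)) with hF1
  set F2 := Finset.univ.filter (fun y : Fin G → Fin 4 =>
    a ≤ -1 * ((countLetter y 0 : ℝ) - μ)) with hF2
  have hwnn := fun y => mutateW_nonneg hp0.le hp1 x y
  have hsub : Finset.univ.filter (· ∈ E) ⊆ F1 ∪ F2 := by
    intro y hy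
    rw [Finset.mem_filter] at hy
    rcases hmem y hy.2 with h | h
    · exact Finset.mem_union_left _ (Finset.mem_filter.mpr ⟨Finset.mem_univ _, h⟩)
    · exact Finset.mem_union_right _ (Finset.mem_filter.mpr ⟨Finset.mem_univ _, h⟩)
  have hsplit : ∑ y ∈ Finset.univ.filter (· ∈ E), mutateW p x y
      ≤ 2 * Real.exp (-2 * a ^ 2 / G) := by
    have hu : ∑ y ∈ Finset.univ.filter (· ∈ E), mutateW p x y
        ≤ ∑ y ∈ F1 ∪ F2, mutateW p x y :=
      Finset.sum_le_sum_of_subset_of_nonneg hsub (fun y _ _ => hwnn y)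
    have hui := Finset.sum_union_inter (s₁ := F1) (s₂ := F2) (f := mutateW p x)
    have hin : 0 ≤ ∑ y ∈ F1 ∩ F2, mutateW p x y :=
      Finset.sum_nonneg fun y _ => hwnn y
    have hs1 : ∑ y ∈ F1, mutateW p x y ≤ Real.exp (-2 * a ^ 2 / G) := h1
    have hs2 : ∑ y ∈ F2, mutateW p x y ≤ Real.exp (-2 * a ^ 2 / G) := h2
    linarith
  have hexp : -2 * a ^ 2 / G = -(32 / 9) * (G:ℝ) * |f / G - 1 / 4| ^ 2 * p ^ 2 * ε ^ 2 := by
    have e1 : a ^ 2 = ε ^ 2 * p ^ 2 * d ^ 2 / 9 := by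
      rw [hadef, div_pow, mul_pow, mul_pow, sq_abs]; ring
    rw [e1, sq_abs, hddef]
    field_simp
    ring
  calc ENNReal.ofReal (∑ y ∈ Finset.univ.filter (· ∈ E), mutateW p x y)
      ≤ ENNReal.ofReal (2 * Real.exp (-2 * a ^ 2 / G)) :=
        ENNReal.ofReal_le_ofReal hsplit
    _ = ENNReal.ofReal (2 * Real.exp (-(32 / 9) * (G:ℝ)
          * |f / G - 1 / 4| ^ 2 * p ^ 2 * ε ^ 2)) := by rw [hexp]


end
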